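/- arXiv:2602.09896 — 10 statements merged into one kernel-verified Lean document; each statement's English description precedes it below -/
import Mathlib

section
/- The set Σ↑ of upward-closed tiles is closed under the tile product: if t₁ and t₂ are upward-closed subsets of Q × {0,1} × Q for the order ⊑, then t₁ ∘ t₂ := {(p, min(c₁,c₂), r) | ∃ q, (p,c₁,q) ∈ t₁ and (q,c₂,r) ∈ t₂} is also upward-closed. -/
variable {Q : Type*} [Fintype Q] [LinearOrder Q]

/-- A Büchi transition: (source, priority, target), priority 0 = Büchi. -/
abbrev BTrans (Q : Type*) := Q × Fin 2 × Q

/-- The order ⊑ on transitions. -/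
def TransLE (d d' : BTrans Q) : Prop :=
  d.1 ≤ d'.1 ∧ d'.2.2 ≤ d.2.2 ∧ (d.1 = d'.1 → d.2.2 = d'.2.2 → d.2.1 ≤ d'.2.1)

/-- A tile is upward-closed for ⊑. -/
def UpClosed (t : Set (BTrans Q)) : Prop := ∀ d ∈ t, ∀ d', TransLE d d' → d' ∈ t

/-- Upward closure of a tile. -/
def upclos (s : Set (BTrans Q)) : Set (BTrans Q) := {d' | ∃ d ∈ s, TransLE d d'}

/-- The tile product. -/
def tmul (t₁ t₂ : Set (BTrans Q)) : Set (BTrans Q) :=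
  {x | ∃ p q r c₁ c₂, (p, c₁, q) ∈ t₁ ∧ (q, c₂, r) ∈ t₂ ∧ x = (p, min c₁ c₂, r)}

/-- Downwards-closed subset of states. -/
def DownClosed (U : Set Q) : Prop := ∀ q ∈ U, ∀ q', q' ≤ q → q' ∈ U

/-- Acceptance of an infinite tile word from initial set I: there is a run
seeing priority 0 infinitely often. -/
def InfAccept (I : Set Q) (w : ℕ → Set (BTrans Q)) : Prop :=
  ∃ (ρ : ℕ → Q) (c : ℕ → Fin 2), ρ 0 ∈ I ∧ (∀ j, (ρ j, c j, ρ (j + 1)) ∈ w j) ∧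
    ∀ N, ∃ j ≥ N, c j = 0

/-- Concatenation of a finite tile word with an infinite tile word. -/
def wcat (u : List (Set (BTrans Q))) (w : ℕ → Set (BTrans Q)) : ℕ → Set (BTrans Q) :=
  fun j => if j < u.length then u.getD j ∅ else w (j - u.length)

/-- Infinite repetition v^ω of a finite tile word. -/
def wpow (v : List (Set (BTrans Q))) : ℕ → Set (BTrans Q) :=
  fun j => v.getD (j % v.length) ∅

/-- q is reachable from I by a partial run over the finite tile word u. -/
def Reach (I : Set Q) (u : List (Set (BTrans Q))) (q : Q) : Prop :=
  ∃ (ρ : ℕ → Q) (c : ℕ → Fin 2), ρ 0 ∈ I ∧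
    (∀ i < u.length, (ρ i, c i, ρ (i + 1)) ∈ u.getD i ∅) ∧ ρ u.length = q

theorem tmul_upClosed (Q : Type*) [Fintype Q] [LinearOrder Q]
    (t₁ t₂ : Set (BTrans Q)) (h₁ : UpClosed t₁) (h₂ : UpClosed t₂) :
    UpClosed (tmul t₁ t₂) := by
  rintro d ⟨p, q, r, c₁, c₂, ht1, ht2, rfl⟩ ⟨p', c', r'⟩ ⟨hp, hr, hc⟩
  simp only at hp hr hc
  set a : Fin 2 := if p = p' then max c₁ c' else c' with ha
  set b : Fin 2 := if r = r' then max c₂ c' else c' with hb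
  refine ⟨p', q, r', a, b, h₁ _ ht1 _ ⟨hp, le_refl q, ?_⟩,
    h₂ _ ht2 _ ⟨le_refl q, hr, ?_⟩, ?_⟩
  · intro hpp _
    rw [ha, if_pos hpp]
    exact le_sup_left
  · intro _ hrr
    rw [hb, if_pos hrr]
    exact le_sup_left
  · have : min a b = c' := by
      by_cases hpp : p = p' <;> by_cases hrr : r = r' <;>
        simp only [ha, hb, if_pos, if_neg, hpp, hrr, if_true, ite_true, ite_false,
          not_false_iff]
      · have h := hc hpp hrr
        fin_cases c₁ <;> fin_cases c₂ <;> fin_cases c' <;> simp_all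
      · exact inf_eq_right.2 le_sup_right
      · exact inf_eq_left.2 le_sup_right
      · exact min_self c'
    rw [this]
end

section
/- Existence and uniqueness of skeletons: for every upward-closed tile t ∈ Σ↑, there exists a unique inclusion-minimal tile s whose upward closure (for ⊑) equals t. Moreover this skeleton s satisfies: for all distinct transitions (p,c,p') and (q,c',q') in s, p ≠ q and p' ≠ q'. -/
variable {Q : Type*} [Fintype Q] [LinearOrder Q]

lemma transLE_refl (d : BTrans Q) : TransLE d d := ⟨le_rfl, le_rfl, fun _ _ => le_rfl⟩

lemma transLE_trans {a b c : BTrans Q} (h1 : TransLE a b) (h2 : TransLE b c) : TransLE a c := by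
  obtain ⟨h11, h12, h13⟩ := h1
  obtain ⟨h21, h22, h23⟩ := h2
  refine ⟨h11.trans h21, h22.trans h12, fun he1 he2 => ?_⟩
  have hb1 : a.1 = b.1 := by
    refine le_antisymm h11 ?_
    rw [he1]; exact h21
  have hb2 : a.2.2 = b.2.2 := by
    refine le_antisymm ?_ h12
    rw [he2]; exact h22
  exact le_trans (h13 hb1 hb2) (h23 (hb1 ▸ he1) (hb2 ▸ he2))

lemma transLE_antisymm {a b : BTrans Q} (h1 : TransLE a b) (h2 : TransLE b a) : a = b := by
  obtain ⟨h11, h12, h13⟩ := h1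
  obtain ⟨h21, h22, h23⟩ := h2
  have e1 : a.1 = b.1 := le_antisymm h11 h21
  have e2 : a.2.2 = b.2.2 := le_antisymm h22 h12
  have e3 : a.2.1 = b.2.1 := le_antisymm (h13 e1 e2) (h23 e1.symm e2.symm)
  exact Prod.ext e1 (Prod.ext e3 e2)

lemma transLT_wf : WellFounded (fun a b : BTrans Q => TransLE a b ∧ a ≠ b) := by
  have htr : IsTrans (BTrans Q) (fun a b => TransLE a b ∧ a ≠ b) := by
    constructor
    intro a b c ⟨hab, hne1⟩ ⟨hbc, hne2⟩
    refine ⟨transLE_trans hab hbc, fun h => ?_⟩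
    subst h
    exact hne2 (transLE_antisymm hbc hab)
  have hir : IsIrrefl (BTrans Q) (fun a b => TransLE a b ∧ a ≠ b) :=
    ⟨fun a h => h.2 rfl⟩
  exact Finite.wellFounded_of_trans_of_irrefl _

lemma exists_min (t : Set (BTrans Q)) :
    ∀ d ∈ t, ∃ m ∈ t, TransLE m d ∧ ∀ e ∈ t, TransLE e m → e = m := by
  intro d
  refine transLT_wf.induction
    (C := fun d => d ∈ t → ∃ m ∈ t, TransLE m d ∧ ∀ e ∈ t, TransLE e m → e = m) d ?_
  intro d ih hd
  by_cases h : ∀ e ∈ t, TransLE e d → e = d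
  · exact ⟨d, hd, transLE_refl d, h⟩
  · push_neg at h
    obtain ⟨e, he, hle, hne⟩ := h
    obtain ⟨m, hm, hml, hmin⟩ := ih e ⟨hle, hne⟩ he
    exact ⟨m, hm, transLE_trans hml hle, hmin⟩

theorem skeleton_exists_unique (Q : Type*) [Fintype Q] [LinearOrder Q]
    (t : Set (BTrans Q)) (ht : UpClosed t) :
    ∃! s : Set (BTrans Q),
      upclos s = t ∧
      (∀ s' : Set (BTrans Q), upclos s' = t → s ⊆ s') ∧
      (∀ d ∈ s, ∀ d' ∈ s, d ≠ d' → d.1 ≠ d'.1 ∧ d.2.2 ≠ d'.2.2) := by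
  classical
  set s : Set (BTrans Q) := {d | d ∈ t ∧ ∀ e ∈ t, TransLE e d → e = d} with hs
  have hup : upclos s = t := by
    ext d'
    constructor
    · rintro ⟨d, ⟨hdt, -⟩, hle⟩
      exact ht d hdt d' hle
    · intro hd
      obtain ⟨m, hm, hml, hmin⟩ := exists_min t d' hd
      exact ⟨m, ⟨hm, hmin⟩, hml⟩
  have hminsub : ∀ s' : Set (BTrans Q), upclos s' = t → s ⊆ s' := by
    rintro s' hs' d ⟨hdt, hdmin⟩
    have hmem : d ∈ upclos s' := hs' ▸ hdt
    obtain ⟨e, he, hle⟩ := hmem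
    have het : e ∈ t := by
      have : e ∈ upclos s' := ⟨e, he, transLE_refl e⟩
      rwa [hs'] at this
    have hed := hdmin e het hle
    rwa [← hed]
  have claimA : ∀ d ∈ s, ∀ d' ∈ s, d.1 = d'.1 → d = d' := by
    rintro d ⟨hdt, hdmin⟩ d' ⟨hdt', hdmin'⟩ h1
    rcases lt_trichotomy d.2.2 d'.2.2 with h | h | h
    · exact (hdmin d' hdt' ⟨h1.ge, h.le, fun _ h2 => absurd h2 h.ne'⟩).symm
    · rcases le_total d.2.1 d'.2.1 with hc | hc
      · exact hdmin' d hdt ⟨h1.le, h.ge, fun _ _ => hc⟩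
      · exact (hdmin d' hdt' ⟨h1.ge, h.le, fun _ _ => hc⟩).symm
    · exact hdmin' d hdt ⟨h1.le, h.le, fun _ h2 => absurd h2 h.ne'⟩
  have claimB : ∀ d ∈ s, ∀ d' ∈ s, d.2.2 = d'.2.2 → d = d' := by
    intro d hd d' hd' h2
    rcases lt_trichotomy d.1 d'.1 with h | h | h
    · exact hd'.2 d hd.1 ⟨h.le, h2.ge, fun h1 _ => absurd h1 h.ne⟩
    · exact claimA d hd d' hd' h
    · exact (hd.2 d' hd'.1 ⟨h.le, h2.le, fun h1 _ => absurd h1 h.ne⟩).symm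
  refine ⟨s, ⟨hup, hminsub, fun d hd d' hd' hne =>
    ⟨fun h => hne (claimA d hd d' hd' h), fun h => hne (claimB d hd d' hd' h)⟩⟩, ?_⟩
  rintro s' ⟨hup', hmin', -⟩
  exact Set.Subset.antisymm (hmin' s hup) (hminsub s' hup')
end

section
/- In an ordered Büchi automaton A = (Q, ≤, I, Γ), for any tile t ∈ Γ, the word t^ω is accepted by A (i.e., there exists a run over the constant tile sequence t,t,t,... starting in I that uses transitions of priority 0 infinitely often) if and only if there exists a state q ∈ I with (q,0,q) ∈ t. -/
variable {Q : Type*} [Fintype Q] [LinearOrder Q]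

theorem tile_omega_accepted_iff (Q : Type*) [Fintype Q] [LinearOrder Q]
    (I : Set Q) (hI : DownClosed I) (t : Set (BTrans Q)) (ht : UpClosed t) :
    InfAccept I (fun _ => t) ↔ ∃ q ∈ I, (q, (0 : Fin 2), q) ∈ t := by
  constructor
  · rintro ⟨ρ, c, h0, hstep, hinf⟩
    obtain ⟨m, hmem, hmin⟩ :=
      Set.exists_min_image (Set.range ρ) id (Set.toFinite _) ⟨ρ 0, ⟨0, rfl⟩⟩
    have hm : ∀ j, m ≤ ρ j := fun j => hmin _ ⟨j, rfl⟩
    have hmI : m ∈ I := hI (ρ 0) h0 m (hm 0)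
    refine ⟨m, hmI, ?_⟩
    by_cases hcase : ∃ j, ρ j = m ∧ ρ (j + 1) ≠ m
    · obtain ⟨j, h1, h2⟩ := hcase
      have hjt := hstep j
      rw [h1] at hjt
      exact ht _ hjt (m, 0, m) ⟨le_refl m, hm (j + 1), fun _ h => absurd h h2⟩
    · push_neg at hcase
      obtain ⟨k, hk⟩ := hmem
      have haux : ∀ j, ρ (k + j) = m := by
        intro j
        induction j with
        | zero => exact hk
        | succ n ih => exact hcase (k + n) ih
      have hall : ∀ j, k ≤ j → ρ j = m := by
        intro j hj
        have := haux (j - k)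
        rwa [Nat.add_sub_cancel' hj] at this
      obtain ⟨j, hjk, hc⟩ := hinf k
      have hjt := hstep j
      rw [hall j hjk, hall (j + 1) (le_trans hjk (Nat.le_succ j)), hc] at hjt
      exact hjt
  · rintro ⟨q, hqI, hq⟩
    exact ⟨fun _ => q, fun _ => 0, hqI, fun j => hq, fun N => ⟨N, le_refl N, rfl⟩⟩
end

section
/- For an ordered Büchi automaton A = (Q, ≤, I, Γ) and any state q of an upward-closed tile t: if a run over a finite tile word w ∈ (Σ↑)⁺ ends in state q, then for every q' < q there exists a run over w (from the same starting state) that ends in q' and contains at least one Büchi (priority-0) transition. -/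
variable {Q : Type*} [Fintype Q] [LinearOrder Q]

theorem run_lower_with_buchi (Q : Type*) [Fintype Q] [LinearOrder Q]
    (w : List (Set (BTrans Q))) (hw : w ≠ []) (hup : ∀ t ∈ w, UpClosed t)
    (p q : Q) (ρ : ℕ → Q) (c : ℕ → Fin 2)
    (h0 : ρ 0 = p)
    (hrun : ∀ i < w.length, (ρ i, c i, ρ (i + 1)) ∈ w.getD i ∅)
    (hend : ρ w.length = q) :
    ∀ q' < q, ∃ (ρ' : ℕ → Q) (c' : ℕ → Fin 2),
      ρ' 0 = p ∧
      (∀ i < w.length, (ρ' i, c' i, ρ' (i + 1)) ∈ w.getD i ∅) ∧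
      ρ' w.length = q' ∧
      ∃ i < w.length, c' i = 0 := by
  intro q' hq'
  set n := w.length with hn
  have hnpos : 0 < n := List.length_pos_iff.mpr hw
  refine ⟨fun j => if j = n then q' else ρ j, fun j => if j = n - 1 then 0 else c j,
    ?_, ?_, ?_, ⟨n - 1, by omega, by simp⟩⟩
  · simp only [if_neg (by omega : (0:ℕ) ≠ n)]; exact h0
  · intro i hi
    by_cases hlast : i = n - 1
    · subst hlast
      have hi1 : n - 1 + 1 = n := by omega
      simp only [if_neg (by omega : n - 1 ≠ n), hi1, if_pos rfl]
      have hmem : w.getD (n - 1) ∅ ∈ w := by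
        have : (n - 1) < w.length := by omega
        rw [List.getD_eq_getElem _ _ this]
        exact List.getElem_mem this
      have htrans := hrun (n - 1) (by omega)
      rw [hi1] at htrans
      exact hup _ hmem _ htrans (ρ (n-1), 0, q')
        ⟨le_refl _, by rw [hend]; exact hq'.le, fun _ h2 => absurd (hend ▸ h2 : q = q') (ne_of_lt hq').symm⟩
    · have h1 : i ≠ n := by omega
      have h2 : i + 1 ≠ n := by omega
      simp only [if_neg h1, if_neg h2, if_neg hlast]
      exact hrun i hi
  · simp
end

section
/- Prefix-independent positionality property of ordered Büchi languages: let A = (Q, ≤, I, Γ) be an ordered Büchi automaton with language L. For all finite nonempty tile words v, v' over Γ and all finite tile words u, if u(vv')^ω ∈ L then uv^ω ∈ L or u(v')^ω ∈ L. -/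
variable {Q : Type*} [Fintype Q] [LinearOrder Q]

namespace ThirdAux

lemma mem_lower {t : Set (BTrans Q)} (ht : UpClosed t) {p q q' : Q} {c : Fin 2}
    (h : (p, c, q) ∈ t) (hq : q' ≤ q) : (p, c, q') ∈ t :=
  ht _ h _ ⟨le_rfl, hq, fun _ _ => le_rfl⟩

lemma mem_lower0 {t : Set (BTrans Q)} (ht : UpClosed t) {p q q' : Q} {c : Fin 2}
    (h : (p, c, q) ∈ t) (hq : q' < q) : (p, (0 : Fin 2), q') ∈ t :=
  ht _ h _ ⟨le_rfl, hq.le, fun _ h2 => absurd h2.symm hq.ne⟩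

lemma upclosed_getD {Γ : Set (Set (BTrans Q))} (hΓ : ∀ t ∈ Γ, UpClosed t)
    {w : List (Set (BTrans Q))} (hw : ∀ t ∈ w, t ∈ Γ) {i : ℕ} (hi : i < w.length) :
    UpClosed (w.getD i ∅) := by
  have hmem : w.getD i ∅ ∈ w := by
    rw [List.getD_eq_getElem _ _ hi]
    exact List.getElem_mem hi
  exact hΓ _ (hw _ hmem)

/-- Lower the endpoint of a partial run; strict lowering makes the last priority 0. -/
lemma lower_end {Γ : Set (Set (BTrans Q))} (hΓ : ∀ t ∈ Γ, UpClosed t)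
    {w : List (Set (BTrans Q))} (hw : ∀ t ∈ w, t ∈ Γ) (hne : w ≠ [])
    {σ : ℕ → Q} {c : ℕ → Fin 2}
    (hrun : ∀ i < w.length, (σ i, c i, σ (i + 1)) ∈ w.getD i ∅)
    {x : Q} (hx : x ≤ σ w.length) :
    ∃ (σ' : ℕ → Q) (c' : ℕ → Fin 2), σ' 0 = σ 0 ∧ σ' w.length = x ∧
      (∀ i < w.length, (σ' i, c' i, σ' (i + 1)) ∈ w.getD i ∅) ∧
      (x < σ w.length → ∃ i < w.length, c' i = 0) := by
  classical
  have hL : 0 < w.length := List.length_pos_iff.mpr hne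
  rcases eq_or_lt_of_le hx with heq | hlt
  · exact ⟨σ, c, rfl, heq.symm, hrun, fun hc => absurd heq hc.ne⟩
  · refine ⟨Function.update σ w.length x, Function.update c (w.length - 1) 0, ?_, ?_, ?_, ?_⟩
    · exact Function.update_of_ne (by omega) _ _
    · exact Function.update_self _ _ _
    · intro i hi
      rcases eq_or_ne i (w.length - 1) with rfl | hne'
      · have h1 : Function.update σ w.length x (w.length - 1) = σ (w.length - 1) :=
          Function.update_of_ne (by omega) _ _
        have h2 : (w.length - 1) + 1 = w.length := by omega
        have h3 : Function.update σ w.length x ((w.length - 1) + 1) = x := by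
          rw [h2]; exact Function.update_self _ _ _
        rw [h1, h3, Function.update_self]
        have h4 := hrun (w.length - 1) (by omega)
        rw [h2] at h4
        exact mem_lower0 (upclosed_getD hΓ hw (by omega)) h4 hlt
      · have h1 : Function.update σ w.length x i = σ i := Function.update_of_ne (by omega) _ _
        have h2 : Function.update σ w.length x (i + 1) = σ (i + 1) :=
          Function.update_of_ne (by omega) _ _
        have h3 : Function.update c (w.length - 1) 0 i = c i := Function.update_of_ne hne' _ _
        rw [h1, h2, h3]
        exact hrun i hi
    · intro _
      exact ⟨w.length - 1, by omega, Function.update_self _ _ _⟩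

lemma reach_lower {Γ : Set (Set (BTrans Q))} (hΓ : ∀ t ∈ Γ, UpClosed t)
    {I : Set Q} (hI : DownClosed I) {u : List (Set (BTrans Q))}
    (hu : ∀ t ∈ u, t ∈ Γ) {a x : Q} (hx : x ≤ a) (h : Reach I u a) : Reach I u x := by
  obtain ⟨ρ, c, h0, hrun, hend⟩ := h
  rcases eq_or_ne u [] with rfl | hne
  · refine ⟨fun _ => x, c, ?_, ?_, rfl⟩
    · exact hI (ρ 0) h0 x (by rw [show ρ 0 = a from hend]; exact hx)
    · intro i hi; simp at hi
  · obtain ⟨σ', c', h0', hend', hrun', _⟩ := lower_end hΓ hu hne hrun (hend ▸ hx)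
    exact ⟨σ', c', h0' ▸ h0, hrun', hend'⟩

/-- From a Büchi-containing nonempty loop run, with weaker hypothesis:
run from x to y with x ≤ y and (strict or Büchi inside), get loop at x with Büchi. -/
lemma loop_run {Γ : Set (Set (BTrans Q))} (hΓ : ∀ t ∈ Γ, UpClosed t)
    {w : List (Set (BTrans Q))} (hw : ∀ t ∈ w, t ∈ Γ) (hne : w ≠ [])
    {σ : ℕ → Q} {c : ℕ → Fin 2}
    (hrun : ∀ i < w.length, (σ i, c i, σ (i + 1)) ∈ w.getD i ∅)
    {x : Q} (h0 : σ 0 = x) (hxy : x ≤ σ w.length)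
    (hB : x < σ w.length ∨ ∃ i < w.length, c i = 0) :
    ∃ (σ' : ℕ → Q) (c' : ℕ → Fin 2), σ' 0 = x ∧ σ' w.length = x ∧
      (∀ i < w.length, (σ' i, c' i, σ' (i + 1)) ∈ w.getD i ∅) ∧
      ∃ i < w.length, c' i = 0 := by
  obtain ⟨σ', c', h0', hend', hrun', hlast⟩ := lower_end hΓ hw hne hrun hxy
  rcases eq_or_lt_of_le hxy with heq | hlt
  · rcases hB with h | h
    · exact absurd heq h.ne
    · exact ⟨σ, c, h0, heq.symm, hrun, h⟩
  · exact ⟨σ', c', h0' ▸ h0, hend', hrun', hlast hlt⟩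

/-- Assemble an accepting run for u · w^ω from reachability and a Büchi loop. -/
lemma assemble {Γ : Set (Set (BTrans Q))} (hΓ : ∀ t ∈ Γ, UpClosed t)
    {I : Set Q} {u w : List (Set (BTrans Q))}
    (hw : ∀ t ∈ w, t ∈ Γ) (hne : w ≠ [])
    {x : Q} (hreach : Reach I u x)
    {σ : ℕ → Q} {c : ℕ → Fin 2} (h0 : σ 0 = x) (hL : σ w.length = x)
    (hrun : ∀ i < w.length, (σ i, c i, σ (i + 1)) ∈ w.getD i ∅)
    (hB : ∃ i < w.length, c i = 0) :
    InfAccept I (wcat u (wpow w)) := by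
  classical
  obtain ⟨ρu, cu, hI0, hrunu, hend⟩ := hreach
  have hL0 : 0 < w.length := List.length_pos_iff.mpr hne
  have hwrap : ∀ d : ℕ, σ ((d + 1) % w.length) = σ (d % w.length + 1) := by
    intro d
    have hd : d + 1 = (d % w.length + 1) + w.length * (d / w.length) := by
      have := Nat.mod_add_div d w.length; omega
    rw [hd, Nat.add_mul_mod_self_left]
    rcases lt_or_ge (d % w.length + 1) w.length with h | h
    · rw [Nat.mod_eq_of_lt h]
    · have heq : d % w.length + 1 = w.length := by
        have := Nat.mod_lt d hL0; omega
      rw [heq, Nat.mod_self, h0, ← hL]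
  set ρ' : ℕ → Q := fun j => if j < u.length then ρu j else σ ((j - u.length) % w.length)
    with hρ'
  set c' : ℕ → Fin 2 := fun j => if j < u.length then cu j else c ((j - u.length) % w.length)
    with hc'
  refine ⟨ρ', c', ?_, ?_, ?_⟩
  · rcases lt_or_ge 0 u.length with h | h
    · simp only [hρ', if_pos h]; exact hI0
    · have hN0 : u.length = 0 := by omega
      simp only [hρ', hN0, if_neg (lt_irrefl 0), Nat.sub_zero, Nat.zero_mod, h0]
      rw [hN0] at hend
      exact hend ▸ hI0
  · intro j
    rcases lt_or_ge j u.length with hj | hj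
    · have htile : wcat u (wpow w) j = u.getD j ∅ := by simp [wcat, hj]
      rw [htile]
      simp only [hρ', hc', if_pos hj]
      rcases lt_or_ge (j + 1) u.length with hj1 | hj1
      · rw [if_pos hj1]; exact hrunu j hj
      · have hj1' : j + 1 = u.length := by omega
        rw [if_neg (by omega)]
        have hh : σ ((j + 1 - u.length) % w.length) = ρu (j + 1) := by
          rw [hj1', Nat.sub_self, Nat.zero_mod, h0, ← hend]
        rw [hh]
        exact hrunu j hj
    · have htile : wcat u (wpow w) j = w.getD ((j - u.length) % w.length) ∅ := by
        simp [wcat, wpow, Nat.not_lt.mpr hj]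
      rw [htile]
      simp only [hρ', hc', if_neg (by omega : ¬ j < u.length),
        if_neg (by omega : ¬ j + 1 < u.length)]
      have h1 : j + 1 - u.length = (j - u.length) + 1 := by omega
      rw [h1, hwrap (j - u.length)]
      exact hrun ((j - u.length) % w.length) (Nat.mod_lt _ hL0)
  · intro M
    obtain ⟨i₀, hi₀, hc₀⟩ := hB
    refine ⟨u.length + M * w.length + i₀, ?_, ?_⟩
    · have : M ≤ M * w.length := Nat.le_mul_of_pos_right M hL0
      omega
    · simp only [hc', if_neg (by omega : ¬ u.length + M * w.length + i₀ < u.length)]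
      have hmod : (u.length + M * w.length + i₀ - u.length) % w.length = i₀ := by
        have h1 : u.length + M * w.length + i₀ - u.length = M * w.length + i₀ := by omega
        rw [h1, Nat.mul_add_mod', Nat.mod_eq_of_lt hi₀]
      rw [hmod]; exact hc₀


lemma exists_good (s : ℕ → Q) (B : ℕ → Prop) (hB : ∀ M, ∃ n ≥ M, B n) :
    ∃ n, s n ≤ s 0 ∧ s n ≤ s (n + 1) ∧ (s n < s (n + 1) ∨ B n) := by
  classical
  set P : ℕ → Prop := fun n => s n ≤ s (n + 1) ∧ (s n < s (n + 1) ∨ B n) with hP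
  have hnotP : ∀ n, ¬ P n → s (n + 1) ≤ s n := by
    intro n hn
    rcases le_or_gt (s (n+1)) (s n) with h | h
    · exact h
    · exact absurd ⟨h.le, Or.inl h⟩ hn
  have hex : ∃ n, P n := by
    by_contra hno
    push_neg at hno
    have hanti : Antitone s := antitone_nat_of_succ_le (fun n => hnotP n (hno n))
    obtain ⟨q, ⟨M, hM⟩, hmin⟩ :=
      Set.exists_min_image (Set.range s) id (Set.toFinite _) ⟨s 0, 0, rfl⟩
    obtain ⟨n, hnM, hBn⟩ := hB M
    have h1 : s (n + 1) < s n := by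
      by_contra hc
      push_neg at hc
      exact hno n ⟨hc, Or.inr hBn⟩
    have h2 : s n ≤ s M := hanti hnM
    have h3 : s M ≤ s (n + 1) := hM ▸ hmin (s (n + 1)) ⟨n + 1, rfl⟩
    exact absurd (lt_of_lt_of_le (h1.trans_le h2) h3) (lt_irrefl _)
  set n₀ := Nat.find hex with hn₀
  have hstep : ∀ j ≤ n₀, s j ≤ s 0 := by
    intro j hj
    induction j with
    | zero => exact le_rfl
    | succ k ih =>
      have hk : ¬ P k := Nat.find_min hex (by omega)
      exact (hnotP k hk).trans (ih (by omega))
  obtain ⟨h1, h2⟩ := Nat.find_spec hex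
  exact ⟨n₀, hstep n₀ le_rfl, h1, h2⟩


/-- Boundary position of the n-th block. -/
def bT (N m p n : ℕ) : ℕ := N + n / 2 * p + (if n % 2 = 1 then m else 0)

/-- The tile word of the n-th block. -/
def wB (v v' : List (Set (BTrans Q))) (n : ℕ) : List (Set (BTrans Q)) :=
  if n % 2 = 1 then v' else v

lemma bT_zero (N m p : ℕ) : bT N m p 0 = N := by simp [bT]

lemma bT_succ (N m mm n : ℕ) :
    bT N m (m + mm) (n + 1) = bT N m (m + mm) n + (if n % 2 = 1 then mm else m) := by
  unfold bT
  rcases Nat.mod_two_eq_zero_or_one n with h | h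
  · have h1 : (n + 1) % 2 = 1 := by omega
    have h2 : (n + 1) / 2 = n / 2 := by omega
    simp [h, h1, h2]
  · have h1 : (n + 1) % 2 = 0 := by omega
    have h2 : (n + 1) / 2 = n / 2 + 1 := by omega
    simp [h, h1, h2]
    ring

lemma wB_length (v v' : List (Set (BTrans Q))) (n : ℕ) :
    (wB v v' n).length = if n % 2 = 1 then v'.length else v.length := by
  unfold wB; split <;> rfl

lemma block_tile (u v v' : List (Set (BTrans Q))) (hm : 0 < v.length)
    (hm' : 0 < v'.length) (n i : ℕ) (hi : i < (wB v v' n).length) :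
    wcat u (wpow (v ++ v')) (bT u.length v.length (v.length + v'.length) n + i)
      = (wB v v' n).getD i ∅ := by
  have hp : 0 < v.length + v'.length := by omega
  have hge : u.length ≤ bT u.length v.length (v.length + v'.length) n + i := by
    unfold bT; omega
  have h1 : wcat u (wpow (v ++ v')) (bT u.length v.length (v.length + v'.length) n + i)
      = (v ++ v').getD
        ((bT u.length v.length (v.length + v'.length) n + i - u.length)
          % (v.length + v'.length)) ∅ := by
    simp [wcat, wpow, Nat.not_lt.mpr hge, List.length_append]
  rw [h1]
  rcases Nat.mod_two_eq_zero_or_one n with h | h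
  · have hwb : wB v v' n = v := by unfold wB; simp [h]
    rw [hwb] at hi ⊢
    have h2 : bT u.length v.length (v.length + v'.length) n + i - u.length
        = n / 2 * (v.length + v'.length) + i := by
      unfold bT; simp [h]; omega
    rw [h2, Nat.mul_add_mod', Nat.mod_eq_of_lt (by omega : i < v.length + v'.length)]
    exact List.getD_append _ _ _ _ hi
  · have hwb : wB v v' n = v' := by unfold wB; simp [h]
    rw [hwb] at hi ⊢
    have h2 : bT u.length v.length (v.length + v'.length) n + i - u.length
        = n / 2 * (v.length + v'.length) + (v.length + i) := by
      unfold bT; simp [h]; omega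
    rw [h2, Nat.mul_add_mod',
      Nat.mod_eq_of_lt (by omega : v.length + i < v.length + v'.length)]
    rw [List.getD_append_right _ _ _ _ (by omega : v.length ≤ v.length + i)]
    congr 1
    omega

lemma block_index (u v v' : List (Set (BTrans Q))) (hm : 0 < v.length)
    (hm' : 0 < v'.length) (M j : ℕ)
    (hj : u.length + (v.length + v'.length) * M ≤ j) :
    ∃ n ≥ M, ∃ i < (wB v v' n).length,
      bT u.length v.length (v.length + v'.length) n + i = j := by
  have hp : 0 < v.length + v'.length := by omega
  set p := v.length + v'.length with hpdef
  set d := j - u.length with hd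
  have hdM : p * M ≤ d := by omega
  have hdiv := Nat.div_add_mod d p
  have hdiv' : d / p * p + d % p = d := by rw [mul_comm]; exact hdiv
  have hrlt : d % p < p := Nat.mod_lt d hp
  have hMk : M ≤ d / p := by
    rw [Nat.le_div_iff_mul_le hp, mul_comm]
    omega
  rcases lt_or_ge (d % p) v.length with hr | hr
  · refine ⟨2 * (d / p), by omega, d % p, ?_, ?_⟩
    · rw [wB_length]
      simp [Nat.mul_mod_right]
      omega
    · unfold bT
      have h1 : 2 * (d / p) / 2 = d / p := by omega
      have h2 : 2 * (d / p) % 2 = 0 := by omega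
      rw [h1, h2]
      simp
      omega
  · refine ⟨2 * (d / p) + 1, by omega, d % p - v.length, ?_, ?_⟩
    · rw [wB_length]
      have h2 : (2 * (d / p) + 1) % 2 = 1 := by omega
      rw [h2]
      simp
      omega
    · unfold bT
      have h1 : (2 * (d / p) + 1) / 2 = d / p := by omega
      have h2 : (2 * (d / p) + 1) % 2 = 1 := by omega
      rw [h1, h2]
      simp
      omega

end ThirdAux

theorem third_local_preference (Q : Type*) [Fintype Q] [LinearOrder Q]
    (Γ : Set (Set (BTrans Q))) (hΓ : ∀ t ∈ Γ, UpClosed t)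
    (I : Set Q) (hI : DownClosed I)
    (u v v' : List (Set (BTrans Q)))
    (hu : ∀ t ∈ u, t ∈ Γ) (hv : ∀ t ∈ v, t ∈ Γ) (hv' : ∀ t ∈ v', t ∈ Γ)
    (hvne : v ≠ []) (hv'ne : v' ≠ [])
    (h : InfAccept I (wcat u (wpow (v ++ v')))) :
    InfAccept I (wcat u (wpow v)) ∨ InfAccept I (wcat u (wpow v')) := by
  classical
  obtain ⟨ρ, c, hI0, hrun, hbuchi⟩ := h
  have hm : 0 < v.length := List.length_pos_iff.mpr hvne
  have hm' : 0 < v'.length := List.length_pos_iff.mpr hv'ne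
  have hblock : ∀ n, ∀ i < (ThirdAux.wB v v' n).length,
      (ρ (ThirdAux.bT u.length v.length (v.length + v'.length) n + i),
       c (ThirdAux.bT u.length v.length (v.length + v'.length) n + i),
       ρ (ThirdAux.bT u.length v.length (v.length + v'.length) n + i + 1))
        ∈ (ThirdAux.wB v v' n).getD i ∅ := by
    intro n i hi
    have hx := hrun (ThirdAux.bT u.length v.length (v.length + v'.length) n + i)
    rwa [ThirdAux.block_tile u v v' hm hm' n i hi] at hx
  have hBio : ∀ M, ∃ n ≥ M, ∃ i < (ThirdAux.wB v v' n).length,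
      c (ThirdAux.bT u.length v.length (v.length + v'.length) n + i) = 0 := by
    intro M
    obtain ⟨j, hj, hcj⟩ := hbuchi (u.length + (v.length + v'.length) * M)
    obtain ⟨n, hn, i, hi, hij⟩ := ThirdAux.block_index u v v' hm hm' M j hj
    exact ⟨n, hn, i, hi, by rw [hij]; exact hcj⟩
  obtain ⟨n₀, hle0, hle, hgood⟩ := ThirdAux.exists_good
    (fun n => ρ (ThirdAux.bT u.length v.length (v.length + v'.length) n))
    (fun n => ∃ i < (ThirdAux.wB v v' n).length,
      c (ThirdAux.bT u.length v.length (v.length + v'.length) n + i) = 0) hBio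
  have hTsucc : ThirdAux.bT u.length v.length (v.length + v'.length) (n₀ + 1)
      = ThirdAux.bT u.length v.length (v.length + v'.length) n₀
        + (ThirdAux.wB v v' n₀).length := by
    rw [ThirdAux.bT_succ, ThirdAux.wB_length]
  rw [hTsucc] at hle hgood
  have hwbΓ : ∀ t ∈ ThirdAux.wB v v' n₀, t ∈ Γ := by
    unfold ThirdAux.wB
    split
    · exact hv'
    · exact hv
  have hwbne : ThirdAux.wB v v' n₀ ≠ [] := by
    unfold ThirdAux.wB
    split
    · exact hv'ne
    · exact hvne
  obtain ⟨σ', c', h0', hL', hrun', hB'⟩ :=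
    ThirdAux.loop_run hΓ hwbΓ hwbne
      (σ := fun i => ρ (ThirdAux.bT u.length v.length (v.length + v'.length) n₀ + i))
      (c := fun i => c (ThirdAux.bT u.length v.length (v.length + v'.length) n₀ + i))
      (fun i hi => hblock n₀ i hi) rfl hle hgood
  have hreach0 : Reach I u (ρ u.length) := by
    refine ⟨ρ, c, hI0, fun i hi => ?_, rfl⟩
    have hx := hrun i
    rwa [show wcat u (wpow (v ++ v')) i = u.getD i ∅ from by simp [wcat, hi]] at hx
  have hxle : ρ (ThirdAux.bT u.length v.length (v.length + v'.length) n₀) ≤ ρ u.length := by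
    rw [ThirdAux.bT_zero] at hle0
    exact hle0
  have hreach := ThirdAux.reach_lower hΓ hI hu hxle hreach0
  have hacc := ThirdAux.assemble hΓ hwbΓ hwbne hreach h0' hL' hrun' hB'
  rcases Nat.mod_two_eq_zero_or_one n₀ with hpar | hpar
  · left
    rwa [show ThirdAux.wB v v' n₀ = v from by unfold ThirdAux.wB; simp [hpar]] at hacc
  · right
    rwa [show ThirdAux.wB v v' n₀ = v' from by unfold ThirdAux.wB; simp [hpar]] at hacc
end

section
/- Second local preference property for ordered Büchi languages: let A = (Q, ≤, I, Γ) be an ordered Büchi automaton with language L. For every finite tile word u, nonempty finite tile word v, and infinite tile word w over Γ, if uvw ∈ L then uv^ω ∈ L or uw ∈ L. -/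
variable {Q : Type*} [Fintype Q] [LinearOrder Q]

lemma wcat_lt (u : List (Set (BTrans Q))) (w : ℕ → Set (BTrans Q)) {j : ℕ}
    (h : j < u.length) : wcat u w j = u.getD j ∅ := if_pos h

lemma wcat_ge (u : List (Set (BTrans Q))) (w : ℕ → Set (BTrans Q)) {j : ℕ}
    (h : u.length ≤ j) : wcat u w j = w (j - u.length) := if_neg (not_lt.mpr h)

lemma mymod (x m : ℕ) : (x + 1) % m = (x % m + 1) % m := by
  conv_rhs => rw [Nat.add_mod]
  rw [Nat.add_mod, Nat.mod_mod_of_dvd x (dvd_refl m)]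

theorem second_local_preference (Q : Type*) [Fintype Q] [LinearOrder Q]
    (Γ : Set (Set (BTrans Q))) (hΓ : ∀ t ∈ Γ, UpClosed t)
    (I : Set Q) (hI : DownClosed I)
    (u v : List (Set (BTrans Q))) (w : ℕ → Set (BTrans Q))
    (hu : ∀ t ∈ u, t ∈ Γ) (hv : ∀ t ∈ v, t ∈ Γ) (hw : ∀ j, w j ∈ Γ)
    (hvne : v ≠ [])
    (h : InfAccept I (wcat u (wcat v w))) :
    InfAccept I (wcat u (wpow v)) ∨ InfAccept I (wcat u w) := by
  obtain ⟨ρ, c, h0, htr, hinf⟩ := h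
  have hm : 0 < v.length := List.length_pos_iff.mpr hvne
  have hutile : ∀ j < u.length, wcat u (wcat v w) j = u.getD j ∅ :=
    fun j hj => wcat_lt u _ hj
  have hvtile : ∀ k < v.length, wcat u (wcat v w) (u.length + k) = v.getD k ∅ := by
    intro k hk
    rw [wcat_ge u _ (by omega), Nat.add_sub_cancel_left, wcat_lt v w hk]
  have hwtile : ∀ j, u.length + v.length ≤ j →
      wcat u (wcat v w) j = w (j - u.length - v.length) := by
    intro j hj
    rw [wcat_ge u _ (by omega), wcat_ge v w (by omega)]
  have hvup : ∀ k < v.length, UpClosed (v.getD k ∅) := by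
    intro k hk
    rw [List.getD_eq_getElem v ∅ hk]
    exact hΓ _ (hv _ (List.getElem_mem hk))
  have hwup : ∀ j, UpClosed (w j) := fun j => hΓ _ (hw j)
  rcases le_or_gt (ρ (u.length + v.length)) (ρ u.length) with hle | hlt
  · -- the state after v is ≤ the state before v : skip v, accept u·w
    right
    refine ⟨fun j => if j ≤ u.length then ρ j else ρ (j + v.length),
            fun j => if j < u.length then c j else c (j + v.length),
            by simpa using h0, ?_, ?_⟩
    · intro j
      beta_reduce
      rcases lt_trichotomy j u.length with hj | hj | hj
      · rw [if_pos hj.le, if_pos hj, if_pos (by omega : j + 1 ≤ u.length),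
          wcat_lt u w hj]
        have := htr j
        rwa [hutile j hj] at this
      · subst hj
        rw [if_pos le_rfl, if_neg (lt_irrefl _),
          if_neg (by omega : ¬ u.length + 1 ≤ u.length),
          wcat_ge u w le_rfl, Nat.sub_self]
        have key := htr (u.length + v.length)
        rw [hwtile _ le_rfl, Nat.add_sub_cancel_left, Nat.sub_self] at key
        have hmem : (ρ u.length, c (u.length + v.length),
            ρ (u.length + v.length + 1)) ∈ w 0 :=
          hwup 0 _ key _ ⟨hle, le_rfl, fun _ _ => le_rfl⟩
        rwa [show u.length + 1 + v.length = u.length + v.length + 1 from by omega]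
      · rw [if_neg (by omega : ¬ j ≤ u.length), if_neg (by omega : ¬ j < u.length),
          if_neg (by omega : ¬ j + 1 ≤ u.length), wcat_ge u w (by omega),
          show j + 1 + v.length = j + v.length + 1 from by omega]
        have key := htr (j + v.length)
        rwa [hwtile (j + v.length) (by omega),
          show j + v.length - u.length - v.length = j - u.length from by omega] at key
    · intro N
      obtain ⟨j, hjN, hj0⟩ := hinf (N + u.length + v.length + 1)
      refine ⟨j - v.length, by omega, ?_⟩
      beta_reduce
      rw [if_neg (by omega : ¬ j - v.length < u.length),
        show j - v.length + v.length = j from by omega]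
      exact hj0
  · -- the state strictly increased along v : pump v, accept u·v^ω
    left
    refine ⟨fun j => if j ≤ u.length then ρ j else
              if (j - u.length) % v.length = 0 then ρ (u.length + v.length)
              else ρ (u.length + (j - u.length) % v.length),
            fun j => if j ≤ u.length then c j else
              if (j - u.length) % v.length = 0 then 0
              else c (u.length + (j - u.length) % v.length),
            by simpa using h0, ?_, ?_⟩
    · intro j
      beta_reduce
      rcases lt_or_ge j u.length with hj | hj
      · simp only [if_pos hj.le, if_pos (by omega : j + 1 ≤ u.length)]
        rw [wcat_lt u _ hj]
        have := htr j
        rwa [hutile j hj] at this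
      · have hk : (j - u.length) % v.length < v.length := Nat.mod_lt _ hm
        rw [wcat_ge u _ hj]
        show _ ∈ wpow v (j - u.length)
        rw [wpow]
        have h1 : (j + 1 - u.length) % v.length
            = ((j - u.length) % v.length + 1) % v.length := by
          rw [show j + 1 - u.length = (j - u.length) + 1 from by omega]
          exact mymod _ _
        have hsucc : (if j + 1 ≤ u.length then ρ (j + 1) else
            if (j + 1 - u.length) % v.length = 0 then ρ (u.length + v.length)
            else ρ (u.length + (j + 1 - u.length) % v.length))
            = ρ (u.length + (j - u.length) % v.length + 1) := by
          rw [if_neg (by omega : ¬ j + 1 ≤ u.length), h1]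
          rcases Nat.lt_or_ge ((j - u.length) % v.length + 1) v.length with hkm | hkm
          · rw [Nat.mod_eq_of_lt hkm, if_neg (by omega)]
            congr 1 <;> omega
          · have hkm' : (j - u.length) % v.length + 1 = v.length := by omega
            rw [hkm', Nat.mod_self, if_pos rfl]
            congr 1 <;> omega
        rw [hsucc]
        rcases eq_or_lt_of_le hj with hjn | hjn
        · -- j = u.length
          have hk0 : (j - u.length) % v.length = 0 := by
            rw [← hjn, Nat.sub_self, Nat.zero_mod]
          rw [if_pos (le_of_eq hjn.symm), hk0]
          have horig := htr u.length
          rw [show u.length = u.length + 0 from rfl, hvtile 0 hm] at horig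
          rw [← hjn]
          simpa using horig
        · simp only [if_neg (by omega : ¬ j ≤ u.length)]
          rcases Nat.eq_zero_or_pos ((j - u.length) % v.length) with hk0 | hk0
          · simp only [hk0, if_pos rfl]
            have horig := htr u.length
            rw [show u.length = u.length + 0 from rfl, hvtile 0 hm] at horig
            simp only [Nat.add_zero] at horig ⊢
            exact hvup 0 hm _ horig _
              ⟨hlt.le, le_rfl, fun he _ => absurd he (ne_of_lt hlt)⟩
          · simp only [if_neg (by omega : ¬ (j - u.length) % v.length = 0)]
            have horig := htr (u.length + (j - u.length) % v.length)
            rwa [hvtile _ hk] at horig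
    · intro N
      have hge : N + 1 ≤ (N + 1) * v.length := Nat.le_mul_of_pos_right (N + 1) hm
      refine ⟨u.length + (N + 1) * v.length, by omega, ?_⟩
      beta_reduce
      rw [if_neg (by omega : ¬ u.length + (N + 1) * v.length ≤ u.length),
        Nat.add_sub_cancel_left, Nat.mul_mod_left, if_pos rfl]
end

section
/- First local preference property (exchange of continuations) for ordered Büchi languages: let A = (Q, ≤, I, Γ) be an ordered Büchi automaton with language L. For all finite tile words u, u' and infinite tile words w, w' over Γ, if uw ∈ L and u'w' ∈ L, then uw' ∈ L or u'w ∈ L. -/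
variable {Q : Type*} [Fintype Q] [LinearOrder Q]

lemma splice_run {Q : Type*} [LinearOrder Q] (I : Set Q)
    (u u' : List (Set (BTrans Q))) (w' : ℕ → Set (BTrans Q))
    (hup : ∀ j, UpClosed (w' j))
    (ρ ρ' : ℕ → Q) (c c' : ℕ → Fin 2)
    (h0 : ρ 0 ∈ I)
    (hr : ∀ i < u.length, (ρ i, c i, ρ (i + 1)) ∈ u.getD i ∅)
    (hr' : ∀ j, (ρ' j, c' j, ρ' (j + 1)) ∈ wcat u' w' j)
    (hle : ρ' u'.length ≤ ρ u.length)
    (hb : ∀ N, ∃ j ≥ N, c' j = 0) :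
    InfAccept I (wcat u w') := by
  refine ⟨fun j => if j ≤ u.length then ρ j else ρ' (j - u.length + u'.length),
    fun j => if j < u.length then c j else c' (j - u.length + u'.length),
    by simpa using h0, ?_, ?_⟩
  · intro j
    simp only []
    rcases lt_trichotomy j u.length with hj | hj | hj
    · simp only [if_pos hj, if_pos hj.le, if_pos (Nat.succ_le_of_lt hj), wcat, if_pos hj]
      exact hr j hj
    · subst hj
      simp only [if_pos (le_refl _), if_neg (lt_irrefl _),
        if_neg (by omega : ¬ u.length + 1 ≤ u.length)]
      have h2 : u.length + 1 - u.length + u'.length = u'.length + 1 := by omega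
      rw [h2]
      have := hr' u'.length
      rw [wcat, if_neg (lt_irrefl _), Nat.sub_self] at this
      have hmem : (ρ u.length, c' u'.length, ρ' (u'.length + 1)) ∈ w' 0 :=
        hup 0 _ this _ ⟨hle, le_refl _, fun _ _ => le_refl _⟩
      rw [wcat, if_neg (lt_irrefl _), Nat.sub_self, Nat.zero_add]
      exact hmem
    · simp only [if_neg (not_lt_of_gt hj), if_neg (by omega : ¬ j ≤ u.length),
        if_neg (by omega : ¬ j + 1 ≤ u.length)]
      have h2 : j + 1 - u.length + u'.length = (j - u.length + u'.length) + 1 := by omega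
      rw [h2]
      have := hr' (j - u.length + u'.length)
      rw [wcat, if_neg (by omega), Nat.add_sub_cancel] at this
      rw [wcat, if_neg (by omega)]
      exact this
  · intro N
    obtain ⟨j', hj', hc⟩ := hb (N + u'.length + u.length)
    refine ⟨j' - u'.length + u.length, by omega, ?_⟩
    simp only []
    rw [if_neg (by omega)]
    have : j' - u'.length + u.length - u.length + u'.length = j' := by omega
    rw [this]; exact hc

theorem first_local_preference (Q : Type*) [Fintype Q] [LinearOrder Q]
    (Γ : Set (Set (BTrans Q))) (hΓ : ∀ t ∈ Γ, UpClosed t)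
    (I : Set Q) (hI : DownClosed I)
    (u u' : List (Set (BTrans Q))) (w w' : ℕ → Set (BTrans Q))
    (hu : ∀ t ∈ u, t ∈ Γ) (hu' : ∀ t ∈ u', t ∈ Γ)
    (hw : ∀ j, w j ∈ Γ) (hw' : ∀ j, w' j ∈ Γ)
    (h1 : InfAccept I (wcat u w)) (h2 : InfAccept I (wcat u' w')) :
    InfAccept I (wcat u w') ∨ InfAccept I (wcat u' w) := by
  obtain ⟨ρ, c, h0, hr, hb⟩ := h1
  obtain ⟨ρ', c', h0', hr', hb'⟩ := h2
  have hrs : ∀ i < u.length, (ρ i, c i, ρ (i + 1)) ∈ u.getD i ∅ := by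
    intro i hi; have := hr i; rwa [wcat, if_pos hi] at this
  have hrs' : ∀ i < u'.length, (ρ' i, c' i, ρ' (i + 1)) ∈ u'.getD i ∅ := by
    intro i hi; have := hr' i; rwa [wcat, if_pos hi] at this
  rcases le_total (ρ' u'.length) (ρ u.length) with hle | hle
  · exact Or.inl (splice_run I u u' w' (fun j => hΓ _ (hw' j)) ρ ρ' c c' h0 hrs hr' hle hb')
  · exact Or.inr (splice_run I u' u w (fun j => hΓ _ (hw j)) ρ' ρ c' c h0' hrs' hr hle hb)
end

section
/- Totality of the induced preference preorder: if a language L ⊆ Π^ω satisfies the first local preference property (for all finite u,u' and infinite w,w': uw ∈ L and u'w' ∈ L imply uw' ∈ L or u'w ∈ L), then the relation ≤_L on Π^ω defined by w ≤_L w' iff (for all finite u, uw ∈ L implies uw' ∈ L) is a total preorder. -/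
/-- Concatenation of a finite word with an infinite word. -/
def catW {A : Type*} (u : List A) (w : ℕ → A) : ℕ → A :=
  fun j => if h : j < u.length then u.get ⟨j, h⟩ else w (j - u.length)

theorem preference_total_preorder {A : Type*} (L : Set (ℕ → A))
    (h1 : ∀ (u u' : List A) (w w' : ℕ → A),
      catW u w ∈ L → catW u' w' ∈ L → catW u w' ∈ L ∨ catW u' w ∈ L) :
    (∀ w : ℕ → A, ∀ u : List A, catW u w ∈ L → catW u w ∈ L) ∧
    (∀ w₁ w₂ w₃ : ℕ → A,
      (∀ u : List A, catW u w₁ ∈ L → catW u w₂ ∈ L) →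
      (∀ u : List A, catW u w₂ ∈ L → catW u w₃ ∈ L) →
      (∀ u : List A, catW u w₁ ∈ L → catW u w₃ ∈ L)) ∧
    (∀ w w' : ℕ → A,
      (∀ u : List A, catW u w ∈ L → catW u w' ∈ L) ∨
      (∀ u : List A, catW u w' ∈ L → catW u w ∈ L)) := by
  refine ⟨fun w u h => h, fun w₁ w₂ w₃ h12 h23 u h => h23 u (h12 u h), ?_⟩
  intro w w'
  by_contra hc
  push_neg at hc
  obtain ⟨⟨u, hu, hu'⟩, ⟨v, hv, hv'⟩⟩ := hc
  rcases h1 u v w w' hu hv with h | h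
  · exact hu' h
  · exact hv' h
end

section
/- Derived preference for periodic words: suppose L ⊆ Π^ω satisfies all three local preference properties: (1) uw ∈ L and u'w' ∈ L imply uw' ∈ L or u'w ∈ L; (2) uvw ∈ L implies uv^ω ∈ L or uw ∈ L; (3) u(vv')^ω ∈ L implies uv^ω ∈ L or u(v')^ω ∈ L (for finite u,u', nonempty finite v,v', infinite w,w'). Then for all nonempty finite words v, v': (vv')^ω ≤_L v^ω or (vv')^ω ≤_L (v')^ω, where w ≤_L w' means uw ∈ L implies uw' ∈ L for all finite u. -/
/-- Infinite periodic repetition v^ω of a nonempty finite word. -/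
def powW {A : Type*} [Inhabited A] (v : List A) : ℕ → A :=
  fun j => v.getD (j % v.length) default

theorem periodic_preference {A : Type*} [Inhabited A] (L : Set (ℕ → A))
    (h1 : ∀ (u u' : List A) (w w' : ℕ → A),
      catW u w ∈ L → catW u' w' ∈ L → catW u w' ∈ L ∨ catW u' w ∈ L)
    (h2 : ∀ (u v : List A) (w : ℕ → A), v ≠ [] →
      catW u (catW v w) ∈ L → catW u (powW v) ∈ L ∨ catW u w ∈ L)
    (h3 : ∀ (u v v' : List A), v ≠ [] → v' ≠ [] →
      catW u (powW (v ++ v')) ∈ L →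
      catW u (powW v) ∈ L ∨ catW u (powW v') ∈ L) :
    ∀ v v' : List A, v ≠ [] → v' ≠ [] →
      (∀ u : List A, catW u (powW (v ++ v')) ∈ L → catW u (powW v) ∈ L) ∨
      (∀ u : List A, catW u (powW (v ++ v')) ∈ L → catW u (powW v') ∈ L) := by
  intro v v' hv hv'
  by_contra h
  push_neg at h
  obtain ⟨⟨u, hu, huv⟩, u', hu', huv'⟩ := h
  have h3u := (h3 u v v' hv hv' hu).resolve_left huv
  have h3u' := (h3 u' v v' hv hv' hu').resolve_right huv'
  rcases h1 u u' (powW v') (powW v) h3u h3u' with h' | h'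
  · exact huv h'
  · exact huv' h'
end

section
/- Third derived preference property: suppose L ⊆ Π^ω satisfies the three local preference properties (as in the previous statement). Then for every nonempty finite word v and infinite word w: vw ≤_L v^ω or vw ≤_L w, where x ≤_L y means ux ∈ L implies uy ∈ L for all finite u. -/
theorem third_derived_preference {A : Type*} [Inhabited A] (L : Set (ℕ → A))
    (h1 : ∀ (u u' : List A) (w w' : ℕ → A),
      catW u w ∈ L → catW u' w' ∈ L → catW u w' ∈ L ∨ catW u' w ∈ L)
    (h2 : ∀ (u v : List A) (w : ℕ → A), v ≠ [] →
      catW u (catW v w) ∈ L → catW u (powW v) ∈ L ∨ catW u w ∈ L)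
    (h3 : ∀ (u v v' : List A), v ≠ [] → v' ≠ [] →
      catW u (powW (v ++ v')) ∈ L →
      catW u (powW v) ∈ L ∨ catW u (powW v') ∈ L) :
    ∀ (v : List A) (w : ℕ → A), v ≠ [] →
      (∀ u : List A, catW u (catW v w) ∈ L → catW u (powW v) ∈ L) ∨
      (∀ u : List A, catW u (catW v w) ∈ L → catW u w ∈ L) := by
  intro v w hv
  by_contra hc
  push_neg at hc
  obtain ⟨⟨u1, hu1, hu1p⟩, u2, hu2, hu2w⟩ := hc
  have hA := h2 u1 v w hv hu1
  have hB := h2 u2 v w hv hu2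
  have h1w : catW u1 w ∈ L := hA.resolve_left hu1p
  have h2p : catW u2 (powW v) ∈ L := hB.resolve_right hu2w
  rcases h1 u1 u2 w (powW v) h1w h2p with h | h
  · exact hu1p h
  · exact hu2w h
end
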